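/- For all integers n ≥ 0 and all odd integers t ≥ 1, the number of t-colored overpartitions of 8n+2 is divisible by 4, i.e., p̄_{-t}(8n+2) ≡ 0 (mod 4). -/

import Mathlib

open scoped Classical

/-- The infinite product `∏_{k ≥ 0} f k` of formal power series, in the situation where,
for each fixed power of `q`, only finitely many factors contribute: the coefficient of
`q^n` is read off from the product of the factors `f 0, …, f n` (all later factors are
assumed to be `1 + O(q^{n+1})`). -/
noncomputable def seriesProd (f : ℕ → PowerSeries ℤ) : PowerSeries ℤ :=
  PowerSeries.mk fun n => PowerSeries.coeff n (∏ k ∈ Finset.range (n + 1), f k)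

/-- The generating function `∏_{k ≥ 1} (1 - q^{2k})^t / (1 - q^k)^{2t}`
for `t`-colored overpartitions. -/
noncomputable def overGF (t : ℕ) : PowerSeries ℤ :=
  seriesProd fun k =>
    (1 - (PowerSeries.X : PowerSeries ℤ) ^ (2 * (k + 1))) ^ t *
      (PowerSeries.invOfUnit (1 - (PowerSeries.X : PowerSeries ℤ) ^ (k + 1)) 1) ^ (2 * t)

/-- `p̄_{-t}(n)`, the number of `t`-colored overpartitions of `n`: the coefficient of `q^n`
in `∏_{k ≥ 1} (1 - q^{2k})^t / (1 - q^k)^{2t}`. -/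
noncomputable def pbar (t n : ℕ) : ℤ :=
  PowerSeries.coeff n (overGF t)

/-- Ramanujan's theta function `φ(q^m) = 1 + 2 ∑_{k ≥ 1} q^{m k²}`. -/
noncomputable def phi (m : ℕ) : PowerSeries ℤ :=
  PowerSeries.mk fun n =>
    if n = 0 then 1 else if ∃ k : ℕ, 0 < k ∧ n = m * k ^ 2 then 2 else 0

/-- `φ(-q) = 1 + 2 ∑_{k ≥ 1} (-1)^{k²} q^{k²}` (note `(-1)^{k²} = (-1)^n` at `n = k²`). -/
noncomputable def phiNeg : PowerSeries ℤ :=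
  PowerSeries.mk fun n =>
    if n = 0 then 1 else if ∃ k : ℕ, 0 < k ∧ n = k ^ 2 then 2 * (-1) ^ n else 0

/-- Ramanujan's theta function `ψ(q^m) = ∑_{k ≥ 0} q^{m·k(k+1)/2}`. -/
noncomputable def psi (m : ℕ) : PowerSeries ℤ :=
  PowerSeries.mk fun n => if ∃ k : ℕ, 2 * n = m * (k * (k + 1)) then 1 else 0

/-- `f_r = ∏_{j ≥ 1} (1 - q^{r j})`. -/
noncomputable def fr (r : ℕ) : PowerSeries ℤ :=
  seriesProd fun j => 1 - (PowerSeries.X : PowerSeries ℤ) ^ (r * (j + 1))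

open PowerSeries

open PowerSeries

section Aux

variable {A : Type*} [CommRing A]

/-- geometric series `1/(1 - X^m)` -/
noncomputable def geomSeries (A : Type*) [CommRing A] (m : ℕ) : PowerSeries A :=
  PowerSeries.mk fun n => if m ∣ n then 1 else 0

lemma geomSeries_mul (m : ℕ) (hm : 0 < m) :
    (1 - (X : PowerSeries A) ^ m) * geomSeries A m = 1 := by
  ext n
  rw [sub_mul, one_mul, map_sub]
  rw [PowerSeries.coeff_X_pow_mul' (geomSeries A m) m n]
  simp only [geomSeries, coeff_mk, coeff_one]
  rcases Nat.eq_zero_or_pos n with rfl | hn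
  · simp [hm.ne']
  · rw [if_neg hn.ne']
    by_cases hle : m ≤ n
    · rw [if_pos hle]
      have : m ∣ n - m ↔ m ∣ n := by
        constructor
        · intro h; have := Nat.dvd_add h (dvd_refl m); rwa [Nat.sub_add_cancel hle] at this
        · intro h; exact Nat.dvd_sub h (dvd_refl m)
      by_cases hd : m ∣ n
      · rw [if_pos hd, if_pos (this.mpr hd)]; ring
      · rw [if_neg hd, if_neg (fun hh => hd (this.mp hh))]; ring
    · rw [if_neg hle, if_neg (fun hd : m ∣ n => hle (Nat.le_of_dvd hn hd))]; ring

lemma inv_unique' {a b c : A} (hb : a * b = 1) (hc : a * c = 1) : b = c := by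
  calc b = b * (a * c) := by rw [hc, mul_one]
  _ = (a * b) * c := by ring
  _ = c := by rw [hb, one_mul]

lemma one_add_pow_sq_zero {e : A} (he : e * e = 0) (t : ℕ) :
    (1 + e) ^ t = 1 + (t : A) * e := by
  induction t with
  | zero => simp
  | succ t ih =>
    rw [pow_succ, ih]
    have hsq : e ^ 2 = 0 := by rw [sq]; exact he
    push_cast
    ring_nf
    rw [hsq]
    ring

lemma prod_one_add {ι : Type*} (s : Finset ι) (e : ι → A)
    (h : ∀ i ∈ s, ∀ j ∈ s, e i * e j = 0) :
    ∏ i ∈ s, (1 + e i) = 1 + ∑ i ∈ s, e i := by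
  classical
  induction s using Finset.induction_on with
  | empty => simp
  | @insert a s hi ih =>
    rw [Finset.prod_insert hi, Finset.sum_insert hi,
      ih (fun i his j hjs => h i (Finset.mem_insert_of_mem his) j (Finset.mem_insert_of_mem hjs))]
    have h2 : e a * ∑ i ∈ s, e i = 0 := by
      rw [Finset.mul_sum]
      exact Finset.sum_eq_zero fun i his =>
        h a (Finset.mem_insert_self a s) i (Finset.mem_insert_of_mem his)
    ring_nf
    rw [mul_comm] at h2 ⊢
    rw [h2]
    ring

end Aux

section Mod4

local notation "R4" => ZMod 4

lemma four_zero_ps : (4 : PowerSeries R4) = 0 := by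
  have : ((4 : ℕ) : PowerSeries R4) = PowerSeries.C ((4 : ℕ) : R4) :=
    (map_natCast (PowerSeries.C (R := R4)) 4).symm
  have h4 : ((4 : ℕ) : R4) = 0 := by decide
  rw [show (4 : PowerSeries R4) = ((4 : ℕ) : PowerSeries R4) by norm_cast, this, h4, map_zero]

lemma two_mul_two_ps : (2 : PowerSeries R4) * 2 = 0 := by
  rw [show (2 : PowerSeries R4) * 2 = 4 by norm_num, four_zero_ps]

/-- Each factor of `overGF t` mod 4 is `1 + 2 X^m/(1-X^m)` for odd `t`. -/
lemma factor_eq (t : ℕ) (ht : Odd t) (m : ℕ) (hm : 0 < m)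
    (s : PowerSeries R4) (hs : (1 - (X : PowerSeries R4) ^ m) * s = 1) :
    (1 - (X : PowerSeries R4) ^ (2 * m)) ^ t * s ^ (2 * t)
      = 1 + 2 * ((X : PowerSeries R4) ^ m * geomSeries R4 m) := by
  set y : PowerSeries R4 := X ^ m with hy
  have hsg : s = geomSeries R4 m := inv_unique' hs (geomSeries_mul m hm)
  have hx2 : (X : PowerSeries R4) ^ (2 * m) = y ^ 2 := by rw [hy, ← pow_mul, mul_comm]
  have key : (1 - y ^ 2) * s ^ 2 = 1 + 2 * (y * s) := by
    have : (1 - y ^ 2) * s ^ 2 = (1 + y) * ((1 - y) * s) * s := by ring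
    rw [this, hs]
    linear_combination hs
  have he : (2 * (y * s)) * (2 * (y * s)) = 0 := by
    have : (2 * (y * s)) * (2 * (y * s)) = (2 * 2) * ((y*s) * (y*s)) := by ring
    rw [this, two_mul_two_ps, zero_mul]
  calc (1 - (X : PowerSeries R4) ^ (2 * m)) ^ t * s ^ (2 * t)
      = ((1 - y ^ 2) * s ^ 2) ^ t := by rw [hx2, mul_pow, pow_mul]
    _ = (1 + 2 * (y * s)) ^ t := by rw [key]
    _ = 1 + (t : PowerSeries R4) * (2 * (y * s)) := one_add_pow_sq_zero he t
    _ = 1 + 2 * (y * s) := by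
        congr 1
        obtain ⟨j, rfl⟩ := ht
        push_cast
        linear_combination ((j : PowerSeries R4) * (y * s)) * four_zero_ps
    _ = 1 + 2 * (y * geomSeries R4 m) := by rw [hsg]

lemma even_card_divisors (n : ℕ) : Even (Nat.divisors (8 * n + 2)).card := by
  have hN0 : (8 * n + 2) ≠ 0 := by omega
  have h2 : Nat.Prime 2 := Nat.prime_two
  have hdvd : 2 ∣ 8 * n + 2 := ⟨4 * n + 1, by ring⟩
  have hnd : ¬ (2 ^ 2 ∣ 8 * n + 2) := by omega
  have h1 : (8 * n + 2).factorization 2 = 1 := by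
    have hle : 2 ^ 1 ∣ 8 * n + 2 := by simpa using hdvd
    have hle' : 1 ≤ (8 * n + 2).factorization 2 :=
      (Nat.Prime.pow_dvd_iff_le_factorization h2 hN0).mp hle
    have hlt : ¬ 2 ≤ (8 * n + 2).factorization 2 := fun h =>
      hnd ((Nat.Prime.pow_dvd_iff_le_factorization h2 hN0).mpr h)
    omega
  rw [Nat.card_divisors hN0, even_iff_two_dvd]
  have hmem : 2 ∈ (8 * n + 2).primeFactors := Nat.mem_primeFactors.mpr ⟨h2, hdvd, hN0⟩
  have hd := Finset.dvd_prod_of_mem (fun p => (8 * n + 2).factorization p + 1) hmem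
  simp only [h1] at hd
  exact hd

lemma even_smul_two (c : ℕ) (hc : Even c) : (c : R4) * 2 = 0 := by
  obtain ⟨d, rfl⟩ := hc
  push_cast
  have h4 : (4 : R4) = 0 := by decide
  linear_combination (d : R4) * h4

lemma coeff_prod_factor (N : ℕ) (hN : 0 < N) (hcard : Even (Nat.divisors N).card) :
    PowerSeries.coeff N
      (∏ k ∈ Finset.range (N + 1),
        (1 + 2 * ((X : PowerSeries R4) ^ (k + 1) * geomSeries R4 (k + 1)))) = 0 := by
  rw [prod_one_add]
  · rw [map_add, map_sum, PowerSeries.coeff_one, if_neg hN.ne']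
    have hterm : ∀ k ∈ Finset.range (N + 1),
        PowerSeries.coeff N (2 * ((X : PowerSeries R4) ^ (k + 1) * geomSeries R4 (k + 1)))
          = if (k + 1) ∣ N ∧ k + 1 ≤ N then (2 : R4) else 0 := by
      intro k _
      rw [show (2 : PowerSeries R4) = PowerSeries.C 2 from (map_ofNat (PowerSeries.C (R := R4)) 2).symm,
        PowerSeries.coeff_C_mul, PowerSeries.coeff_X_pow_mul']
      by_cases hle : k + 1 ≤ N
      · rw [if_pos hle]
        simp only [geomSeries, coeff_mk]
        have hiff : (k + 1) ∣ N - (k + 1) ↔ (k + 1) ∣ N := by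
          constructor
          · intro h
            have := Nat.dvd_add h (dvd_refl (k + 1))
            rwa [Nat.sub_add_cancel hle] at this
          · intro h; exact Nat.dvd_sub h (dvd_refl (k + 1))
        by_cases hd : (k + 1) ∣ N
        · rw [if_pos (hiff.mpr hd), if_pos ⟨hd, hle⟩]; ring
        · rw [if_neg (fun hh => hd (hiff.mp hh)), if_neg (by tauto)]; ring
      · rw [if_neg hle, if_neg (by tauto)]; ring
    rw [Finset.sum_congr rfl hterm, ← Finset.sum_filter, Finset.sum_const, nsmul_eq_mul]
    have hcardeq : (Finset.filter (fun k => (k + 1) ∣ N ∧ k + 1 ≤ N) (Finset.range (N + 1))).card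
        = (Nat.divisors N).card := by
      apply Finset.card_bij (fun k _ => k + 1)
      · intro k hk
        simp only [Finset.mem_filter] at hk
        exact Nat.mem_divisors.mpr ⟨hk.2.1, hN.ne'⟩
      · intro a ha b hb hab; omega
      · intro m hm
        rw [Nat.mem_divisors] at hm
        have hm1 : 1 ≤ m := Nat.pos_of_dvd_of_pos hm.1 hN
        have hmN : m ≤ N := Nat.le_of_dvd hN hm.1
        refine ⟨m - 1, ?_, by omega⟩
        simp only [Finset.mem_filter, Finset.mem_range]
        have : m - 1 + 1 = m := by omega
        rw [this]
        exact ⟨by omega, hm.1, hmN⟩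
    rw [hcardeq]
    have := even_smul_two _ hcard
    rw [this]
    ring
  · intro i _ j _
    have : (2 * ((X : PowerSeries R4) ^ (i + 1) * geomSeries R4 (i + 1))) *
        (2 * ((X : PowerSeries R4) ^ (j + 1) * geomSeries R4 (j + 1)))
        = (2 * 2) * (((X : PowerSeries R4) ^ (i + 1) * geomSeries R4 (i + 1)) *
          ((X : PowerSeries R4) ^ (j + 1) * geomSeries R4 (j + 1))) := by ring
    rw [this, two_mul_two_ps, zero_mul]

end Mod4


/-- For all `n ≥ 0` and all odd `t ≥ 1`, `p̄_{-t}(8n+2) ≡ 0 (mod 4)`. -/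
theorem pbar_eight_n_add_2 (t : ℕ) (ht1 : 1 ≤ t) (ht : Odd t) (n : ℕ) :
    (4 : ℤ) ∣ pbar t (8 * n + 2) := by
  have h4 : ((4 : ℕ) : ℤ) = 4 := by norm_num
  rw [← h4, ← ZMod.intCast_zmod_eq_zero_iff_dvd]
  set N := 8 * n + 2 with hNdef
  have hN : 0 < N := by omega
  set φ := Int.castRingHom (ZMod 4) with hφ
  have hpbar : pbar t N = PowerSeries.coeff N
      (∏ k ∈ Finset.range (N + 1),
        ((1 - (X : PowerSeries ℤ) ^ (2 * (k + 1))) ^ t *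
          (PowerSeries.invOfUnit (1 - (X : PowerSeries ℤ) ^ (k + 1)) 1) ^ (2 * t))) := by
    rw [pbar, overGF, seriesProd, coeff_mk]
  rw [hpbar]
  rw [show ∀ z : ℤ, ((z : ℤ) : ZMod 4) = φ z from fun z => rfl,
    ← PowerSeries.coeff_map, map_prod]
  have hfac : ∀ k ∈ Finset.range (N + 1),
      PowerSeries.map φ
        ((1 - (X : PowerSeries ℤ) ^ (2 * (k + 1))) ^ t *
          (PowerSeries.invOfUnit (1 - (X : PowerSeries ℤ) ^ (k + 1)) 1) ^ (2 * t))
      = 1 + 2 * ((X : PowerSeries (ZMod 4)) ^ (k + 1) * geomSeries (ZMod 4) (k + 1)) := by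
    intro k _
    set s : PowerSeries (ZMod 4) :=
      PowerSeries.map φ (PowerSeries.invOfUnit (1 - (X : PowerSeries ℤ) ^ (k + 1)) 1) with hs
    have hconst : PowerSeries.constantCoeff (1 - (X : PowerSeries ℤ) ^ (k + 1)) = ((1 : ℤˣ) : ℤ) := by
      simp [PowerSeries.constantCoeff_X]
    have hinv : (1 - (X : PowerSeries (ZMod 4)) ^ (k + 1)) * s = 1 := by
      have h := congrArg (PowerSeries.map φ)
        (PowerSeries.mul_invOfUnit (1 - (X : PowerSeries ℤ) ^ (k + 1)) 1 hconst)
      rw [map_mul, map_one, map_sub, map_one, map_pow, PowerSeries.map_X] at h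
      exact h
    rw [map_mul, map_pow, map_pow, map_sub, map_one, map_pow, PowerSeries.map_X]
    exact factor_eq t ht (k + 1) (Nat.succ_pos k) s hinv
  rw [Finset.prod_congr rfl hfac]
  exact coeff_prod_factor N hN (by rw [hNdef]; exact even_card_divisors n)
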